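/- Let K ∈ ℝ, λ ∈ ℝ, D > 0, and set d = 2D. Let f : ℝ → ℝ be twice continuously differentiable on [-D, D] with f(x) > 0 for all x ∈ (-D, D), f(-D) = 0, f(D) = 0, and suppose f''(x) - K x f'(x) = -(λ - K) f(x) for all x ∈ (-D, D). Then for every s ∈ (0, 1), λ ≥ 4s(1-s)·π²/d² + sK. -/

import Mathlib

set_option maxHeartbeats 1000000

open Real Set MeasureTheory

lemma core_contradiction (D : ℝ) (hD : 0 < D) (p p1 W W1 G : ℝ → ℝ)
    (hpc : ContinuousOn p (Icc (-D) D)) (hp1c : ContinuousOn p1 (Icc (-D) D))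
    (hWc : ContinuousOn W (Icc (-D) D)) (hW1c : ContinuousOn W1 (Icc (-D) D))
    (hGc : ContinuousOn G (Icc (-D) D))
    (hp : ∀ x ∈ Ioo (-D) D, HasDerivAt p (p1 x) x)
    (hp2 : ∀ x ∈ Ioo (-D) D, HasDerivAt p1 (G x) x)
    (hW : ∀ x ∈ Ioo (-D) D, HasDerivAt W (W1 x) x)
    (hpD : p D = 0) (hpD' : p (-D) = 0)
    (hineq : ∀ x ∈ Ioo (-D) D,
      0 < p x * G x - (W1 x + (W x)^2) * (p x)^2) : False := by
  have hDD : -D < D := by linarith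
  set h : ℝ → ℝ := fun y => p y * p1 y - W y * (p y)^2 with hh
  set q : ℝ → ℝ := fun y =>
    (p1 y - W y * p y)^2 + (p y * G y - (W1 y + (W y)^2) * (p y)^2) with hq
  have hqc : ContinuousOn q (Icc (-D) D) := by
    apply ContinuousOn.add
    · exact ((hp1c.sub (hWc.mul hpc)).pow 2)
    · exact (hpc.mul hGc).sub ((hW1c.add (hWc.pow 2)).mul (hpc.pow 2))
  have hqint : IntervalIntegrable q volume (-D) D := by
    apply ContinuousOn.intervalIntegrable
    rwa [uIcc_of_le hDD.le]
  have hconth : ContinuousOn h (Icc (-D) D) :=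
    (hpc.mul hp1c).sub (hWc.mul (hpc.pow 2))
  have hderiv : ∀ x ∈ Ioo (-D) D, HasDerivAt h (q x) x := by
    intro x hx
    have hsq : HasDerivAt (fun y => (p y)^2) (2 * p x * p1 x) x := by
      simpa [mul_comm, mul_assoc] using (hp x hx).fun_pow 2
    have H := ((hp x hx).fun_mul (hp2 x hx)).fun_sub ((hW x hx).fun_mul hsq)
    refine H.congr_deriv ?_
    simp only [hq]
    ring
  have hint : ∫ x in (-D)..D, q x = h D - h (-D) :=
    intervalIntegral.integral_eq_sub_of_hasDeriv_right_of_le hDD.le hconth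
      (fun x hx => (hderiv x hx).hasDerivWithinAt) hqint
  have hzero : h D - h (-D) = 0 := by simp [hh, hpD, hpD']
  have hpos : 0 < ∫ x in (-D)..D, q x := by
    apply intervalIntegral.intervalIntegral_pos_of_pos_on hqint _ hDD
    intro x hx
    exact add_pos_of_nonneg_of_pos (sq_nonneg _) (hineq x hx)
  rw [hint, hzero] at hpos
  exact lt_irrefl 0 hpos

theorem dirichlet_eigenvalue_lower_bound
    (K lam D d : ℝ) (hD : 0 < D) (hd : d = 2 * D)
    (f : ℝ → ℝ) (hf : ContDiffOn ℝ 2 f (Set.Icc (-D) D))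
    (hpos : ∀ x ∈ Set.Ioo (-D) D, 0 < f x)
    (hb1 : f (-D) = 0) (hb2 : f D = 0)
    (hode : ∀ x ∈ Set.Ioo (-D) D,
      derivWithin (derivWithin f (Set.Icc (-D) D)) (Set.Icc (-D) D) x
        - K * x * derivWithin f (Set.Icc (-D) D) x = -(lam - K) * f x) :
    ∀ s ∈ Set.Ioo (0:ℝ) 1, lam ≥ 4 * s * (1 - s) * π ^ 2 / d ^ 2 + s * K := by
  intro s hs
  obtain ⟨hs0, hs1⟩ := hs
  have hDD : -D < D := by linarith
  have hd0 : 0 < d := by rw [hd]; linarith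
  have hUD : UniqueDiffOn ℝ (Icc (-D) D) := uniqueDiffOn_Icc hDD
  set f1 := derivWithin f (Icc (-D) D) with hf1d
  set f2 := derivWithin f1 (Icc (-D) D) with hf2d
  have hf1cd : ContDiffOn ℝ 1 f1 (Icc (-D) D) := hf.derivWithin hUD (by norm_num)
  have hf1c : ContinuousOn f1 (Icc (-D) D) := hf1cd.continuousOn
  have hfdiff : DifferentiableOn ℝ f (Icc (-D) D) := hf.differentiableOn (by norm_num)
  have hf1diff : DifferentiableOn ℝ f1 (Icc (-D) D) := hf1cd.differentiableOn one_ne_zero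
  have Hf : ∀ x ∈ Ioo (-D) D, HasDerivAt f (f1 x) x := fun x hx =>
    ((hfdiff x (Ioo_subset_Icc_self hx)).hasDerivWithinAt).hasDerivAt
      (Icc_mem_nhds hx.1 hx.2)
  have Hf1 : ∀ x ∈ Ioo (-D) D, HasDerivAt f1 (f2 x) x := fun x hx =>
    ((hf1diff x (Ioo_subset_Icc_self hx)).hasDerivWithinAt).hasDerivAt
      (Icc_mem_nhds hx.1 hx.2)
  set E : ℝ → ℝ := fun y => Real.exp (-(K/4) * y^2) with hEd
  have hEpos : ∀ y, 0 < E y := fun y => Real.exp_pos _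
  have hEc : Continuous E := by
    apply Real.continuous_exp.comp
    continuity
  have HE : ∀ x : ℝ, HasDerivAt E (-(K/2) * x * E x) x := by
    intro x
    have h1 : HasDerivAt (fun y : ℝ => -(K/4) * y^2) (-(K/4) * (2*x^1)) x :=
      (hasDerivAt_pow 2 x).const_mul (-(K/4))
    have h2 := h1.exp
    convert h2 using 1
    simp [hEd]; ring
  set p : ℝ → ℝ := fun y => f y * E y with hpd
  set p1 : ℝ → ℝ := fun y => f1 y * E y + f y * (-(K/2) * y * E y) with hp1d
  have hpc : ContinuousOn p (Icc (-D) D) := hf.continuousOn.mul hEc.continuousOn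
  have hp1c : ContinuousOn p1 (Icc (-D) D) := by
    apply ContinuousOn.add (hf1c.mul hEc.continuousOn)
    exact hf.continuousOn.mul (Continuous.continuousOn (by fun_prop))
  have Hp : ∀ x ∈ Ioo (-D) D, HasDerivAt p (p1 x) x := fun x hx =>
    (Hf x hx).mul (HE x)
  set μ := lam - K/2 with hμd
  have Hp2 : ∀ x ∈ Ioo (-D) D, HasDerivAt p1 ((K^2*x^2/4 - μ) * p x) x := by
    intro x hx
    have HG : HasDerivAt (fun y : ℝ => -(K/2) * y * E y)
        (-(K/2) * 1 * E x + (-(K/2) * x) * (-(K/2) * x * E x)) x := by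
      have := ((hasDerivAt_id x).const_mul (-(K/2))).mul (HE x)
      exact this.congr_deriv rfl
      try ring
    have H := ((Hf1 x hx).mul (HE x)).add ((Hf x hx).mul HG)
    refine H.congr_deriv ?_
    have hode' := hode x hx
    simp only [hpd, hμd]
    linear_combination (E x) * hode'
  -- geometric constants
  set a := π / d with had
  have ha0 : 0 < a := div_pos Real.pi_pos hd0
  have haD : a * D = π/2 := by rw [had, hd]; field_simp
  set k := 4*s*(1-s) with hkd
  have hk0 : 0 < k := by nlinarith
  set c := -(|1 - 2*s| * |K|)/2 with hcd
  have hbound : ∀ b ∈ Ioo (0:ℝ) a, k*b^2 - c ≤ μ := by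
    intro b hb
    by_contra hlt
    push_neg at hlt
    have hcos : ∀ x ∈ Icc (-D) D, 0 < Real.cos (b*x) := by
      intro x hx
      apply Real.cos_pos_of_mem_Ioo
      constructor
      · have h1 : 0 ≤ b * (x + D) := mul_nonneg hb.1.le (by linarith [hx.1])
        have h2 : 0 < (a - b) * D := mul_pos (by linarith [hb.2]) hD
        nlinarith
      · have h1 : 0 ≤ b * (D - x) := mul_nonneg hb.1.le (by linarith [hx.2])
        have h2 : 0 < (a - b) * D := mul_pos (by linarith [hb.2]) hD
        nlinarith
    set T : ℝ → ℝ := fun y => Real.tan (b*y) with hTd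
    set W : ℝ → ℝ := fun y => -(k*b) * T y + c*y with hWd
    set W1 : ℝ → ℝ := fun y => -(k*b) * (1/Real.cos (b*y)^2 * b) + c with hW1d
    have HW : ∀ x ∈ Ioo (-D) D, HasDerivAt W (W1 x) x := by
      intro x hx
      have hbx : HasDerivAt (fun y : ℝ => b * y) (b * 1) x :=
        (hasDerivAt_id x).const_mul b
      have ht0 := (Real.hasDerivAt_tan
        (ne_of_gt (hcos x (Ioo_subset_Icc_self hx)))).comp x hbx
      have ht : HasDerivAt T (1/Real.cos (b*x)^2 * (b*1)) x := ht0
      have h2 := (ht.const_mul (-(k*b))).add ((hasDerivAt_id x).const_mul c)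
      refine h2.congr_deriv ?_
      simp only [hW1d]
      ring
    have hTc : ContinuousOn T (Icc (-D) D) := by
      apply Real.continuousOn_tan.comp (Continuous.continuousOn (by fun_prop))
      intro x hx
      exact ne_of_gt (hcos x hx)
    have hWc : ContinuousOn W (Icc (-D) D) :=
      (hTc.const_smul (-(k*b))).add (Continuous.continuousOn (by fun_prop))
    have hW1c : ContinuousOn W1 (Icc (-D) D) := by
      apply ContinuousOn.add _ continuousOn_const
      apply ContinuousOn.const_smul _ (-(k*b))
      apply ContinuousOn.mul _ continuousOn_const
      apply ContinuousOn.div continuousOn_const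
      · exact (Real.continuous_cos.comp (by fun_prop)).continuousOn.pow 2
      · intro x hx
        exact pow_ne_zero 2 (ne_of_gt (hcos x hx))
    have hineq : ∀ x ∈ Ioo (-D) D,
        0 < p x * ((K^2*x^2/4 - μ) * p x) - (W1 x + (W x)^2) * (p x)^2 := by
      intro x hx
      have hppos : 0 < p x := by
        have := mul_pos (hpos x hx) (hEpos x)
        simpa [hpd] using this
      have hsec : T x^2 + 1 = 1/Real.cos (b*x)^2 := by
        have hc0 := (hcos x (Ioo_subset_Icc_self hx)).ne'
        simp only [hTd, Real.tan_eq_sin_div_cos, div_pow]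
        field_simp
        exact sin_sq_add_cos_sq _
      have hW1x : W1 x = -(k*b^2) * (T x^2 + 1) + c := by
        simp only [hW1d]
        rw [← hsec]
        ring
      have hWx : W x = -(k*b) * T x + c*x := by simp only [hWd]
      have hkey : K^2*x^2/4 - (-(k*b^2) * (T x^2+1) + c) - (-(k*b)*T x + c*x)^2
          - (k*b^2 - c) = k * (|1 - 2*s| * b * T x - |K| * x/2)^2 := by
        have e1 : |1 - 2*s|^2 = (1-2*s)^2 := sq_abs _
        have e2 : |K|^2 = K^2 := sq_abs _
        rw [hkd, hcd]
        linear_combination (-(4*s*(1-s)*b^2*(T x)^2 + |K|^2*x^2/4)) * e1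
          + (-(x^2/4)) * e2
      have hFB : k*b^2 - c ≤ K^2*x^2/4 - W1 x - (W x)^2 := by
        rw [hW1x, hWx]
        nlinarith [mul_nonneg hk0.le (sq_nonneg (|1 - 2*s| * b * T x - |K| * x/2)), hkey]
      clear_value T W W1 μ k c
      have h1 : 0 < K^2*x^2/4 - W1 x - (W x)^2 - μ := by linarith only [hFB, hlt]
      have h2 : p x * ((K^2*x^2/4 - μ) * p x) - (W1 x + (W x)^2) * (p x)^2
          = (K^2*x^2/4 - W1 x - (W x)^2 - μ) * (p x)^2 := by ring
      rw [h2]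
      exact mul_pos h1 (pow_pos hppos 2)
    have hGc : ContinuousOn (fun x => (K^2*x^2/4 - μ) * p x) (Icc (-D) D) := by
      apply ContinuousOn.mul _ hpc
      exact Continuous.continuousOn (by fun_prop)
    have hpD : p D = 0 := by simp [hpd, hb2]
    have hpD' : p (-D) = 0 := by simp [hpd, hb1]
    exact core_contradiction D hD p p1 W W1 (fun x => (K^2*x^2/4 - μ) * p x)
      hpc hp1c hWc hW1c hGc Hp Hp2 HW hpD hpD' hineq
  have hμa : k*a^2 - c ≤ μ := by
    have hcont : Continuous (fun b : ℝ => k*b^2 - c) := by fun_prop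
    have ht : Filter.Tendsto (fun b : ℝ => k*b^2 - c)
        (nhdsWithin a (Iio a)) (nhds (k*a^2 - c)) :=
      (hcont.tendsto a).mono_left nhdsWithin_le_nhds
    refine le_of_tendsto ht ?_
    filter_upwards [Ioo_mem_nhdsLT_of_mem (⟨ha0, le_refl a⟩ : a ∈ Ioc 0 a)]
      with b hb using hbound b hb
  have ha2 : a^2 = π^2/d^2 := by rw [had, div_pow]
  have hcle : (s - 1/2)*K ≤ -c := by
    have h1 := neg_abs_le ((1-2*s)*K)
    have h2 : |(1-2*s)*K| = |1 - 2*s| * |K| := abs_mul _ _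
    rw [hcd]
    nlinarith [h1, h2]
  clear_value μ k c a
  rw [ge_iff_le]
  have hka : k * a^2 = k * π^2/d^2 := by rw [ha2]; ring
  linarith only [hμa, hcle, hka, hμd]
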